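/- For every natural number n ≥ 1, the Bell number satisfies B_n = B̃_n + B̃_{n+1}, where B̃_m is the number of singleton-free set partitions of an m-element set. -/

import Mathlib

open Finset

/-- A set partition of `Fin n`, modelled as a finite set of blocks. -/
def IsSetPartition {n : ℕ} (P : Finset (Finset (Fin n))) : Prop :=
  (∀ b ∈ P, b.Nonempty) ∧ (∀ b ∈ P, ∀ c ∈ P, b ≠ c → Disjoint b c) ∧
    P.sup id = Finset.univ

namespace BellAux

variable {n : ℕ}

def mapE (b : Finset (Fin n)) : Finset (Fin (n + 1)) := b.map Fin.castSuccEmb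

lemma mem_mapE {b : Finset (Fin n)} {x : Fin n} : x.castSucc ∈ mapE b ↔ x ∈ b :=
  Finset.mem_map' _

lemma mem_mapE' {b : Finset (Fin n)} {a : Fin (n+1)} :
    a ∈ mapE b ↔ ∃ y ∈ b, y.castSucc = a := Finset.mem_map

lemma last_not_mem_mapE (b : Finset (Fin n)) : Fin.last n ∉ mapE b := by
  simp only [mapE, Finset.mem_map]
  rintro ⟨x, -, hx⟩
  exact (Fin.castSucc_lt_last x).ne hx

lemma mapE_injective : Function.Injective (mapE (n := n)) :=
  Finset.map_injective _

lemma card_mapE (b : Finset (Fin n)) : (mapE b).card = b.card := Finset.card_map _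

def sing (P : Finset (Finset (Fin n))) : Finset (Finset (Fin n)) :=
  P.filter (fun b => b.card = 1)

def big (P : Finset (Finset (Fin n))) : Finset (Finset (Fin n)) :=
  P.filter (fun b => 2 ≤ b.card)

def U (P : Finset (Finset (Fin n))) : Finset (Fin n) := (sing P).sup id

def B0 (P : Finset (Finset (Fin n))) : Finset (Fin (n + 1)) :=
  insert (Fin.last n) (mapE (U P))

def f (P : Finset (Finset (Fin n))) : Finset (Finset (Fin (n + 1))) :=
  insert (B0 P) ((big P).image mapE)

lemma mem_U {P : Finset (Finset (Fin n))} {x : Fin n} :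
    x ∈ U P ↔ ({x} : Finset (Fin n)) ∈ P := by
  simp only [U, Finset.mem_sup, sing, Finset.mem_filter, id]
  constructor
  · rintro ⟨b, ⟨hbP, hb1⟩, hxb⟩
    obtain ⟨a, rfl⟩ := Finset.card_eq_one.mp hb1
    simp only [Finset.mem_singleton] at hxb
    subst hxb; exact hbP
  · intro h; exact ⟨{x}, ⟨h, by simp⟩, by simp⟩

lemma sing_union_big {P : Finset (Finset (Fin n))} (hP : IsSetPartition P) :
    sing P ∪ big P = P := by
  ext b
  simp only [Finset.mem_union, sing, big, Finset.mem_filter]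
  constructor
  · rintro (⟨h, -⟩ | ⟨h, -⟩) <;> exact h
  · intro hb
    have h1 : 1 ≤ b.card := Finset.card_pos.mpr (hP.1 b hb)
    rcases eq_or_lt_of_le h1 with h | h
    · exact Or.inl ⟨hb, h.symm⟩
    · exact Or.inr ⟨hb, h⟩

lemma sing_eq_image {P : Finset (Finset (Fin n))} :
    sing P = (U P).image (fun x => ({x} : Finset (Fin n))) := by
  ext b
  simp only [sing, Finset.mem_filter, Finset.mem_image]
  constructor
  · rintro ⟨hbP, hb1⟩
    obtain ⟨a, rfl⟩ := Finset.card_eq_one.mp hb1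
    exact ⟨a, mem_U.mpr hbP, rfl⟩
  · rintro ⟨a, ha, rfl⟩
    exact ⟨mem_U.mp ha, by simp⟩

lemma block_unique {P : Finset (Finset (Fin n))} (hP : IsSetPartition P)
    {b c : Finset (Fin n)} (hb : b ∈ P) (hc : c ∈ P) {x : Fin n}
    (hxb : x ∈ b) (hxc : x ∈ c) : b = c := by
  by_contra hne
  exact (Finset.disjoint_left.mp (hP.2.1 b hb c hc hne) hxb) hxc

lemma exists_block {P : Finset (Finset (Fin n))} (hP : IsSetPartition P) (x : Fin n) :
    ∃ b ∈ P, x ∈ b := by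
  have : x ∈ P.sup id := hP.2.2 ▸ Finset.mem_univ x
  simpa using Finset.mem_sup.mp this

lemma B0_not_mem_image (P : Finset (Finset (Fin n))) :
    B0 P ∉ (big P).image mapE := by
  simp only [Finset.mem_image]
  rintro ⟨b, -, hb⟩
  exact last_not_mem_mapE b (hb ▸ Finset.mem_insert_self _ _)

/-- `f P` is a singleton-free partition when `P` is a partition with a singleton. -/
lemma f_mem_target {P : Finset (Finset (Fin n))} (hP : IsSetPartition P)
    (hs : ∃ b ∈ P, b.card = 1) :
    IsSetPartition (f P) ∧ ∀ b ∈ f P, 2 ≤ b.card := by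
  obtain ⟨s, hsP, hs1⟩ := hs
  obtain ⟨x0, rfl⟩ := Finset.card_eq_one.mp hs1
  have hx0 : x0 ∈ U P := mem_U.mpr hsP
  have hUdisj : ∀ x ∈ U P, ∀ b ∈ big P, x ∉ b := by
    intro x hx b hb hxb
    have hxP : ({x} : Finset (Fin n)) ∈ P := mem_U.mp hx
    have hbP : b ∈ P := (Finset.mem_filter.mp hb).1
    have hb2 : 2 ≤ b.card := (Finset.mem_filter.mp hb).2
    have : ({x} : Finset (Fin n)) = b := block_unique hP hxP hbP (by simp) hxb
    rw [← this] at hb2; simp at hb2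
  refine ⟨⟨?_, ?_, ?_⟩, ?_⟩
  · -- nonempty
    intro b hb
    rcases Finset.mem_insert.mp hb with rfl | hb
    · exact ⟨Fin.last n, Finset.mem_insert_self _ _⟩
    · obtain ⟨c, hc, rfl⟩ := Finset.mem_image.mp hb
      have : c.Nonempty := hP.1 c (Finset.mem_filter.mp hc).1
      obtain ⟨y, hy⟩ := this
      exact ⟨y.castSucc, mem_mapE.mpr hy⟩
  · -- disjoint
    intro b hb c hc hne
    rcases Finset.mem_insert.mp hb with rfl | hb <;>
      rcases Finset.mem_insert.mp hc with rfl | hc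
    · exact absurd rfl hne
    · obtain ⟨c', hc', rfl⟩ := Finset.mem_image.mp hc
      rw [Finset.disjoint_left]
      intro a ha hac
      rcases Finset.mem_insert.mp ha with rfl | ha
      · exact last_not_mem_mapE _ hac
      · obtain ⟨y, hy, rfl⟩ := Finset.mem_map.mp ha
        have hy' : y ∈ c' := by
          simpa [Fin.castSuccEmb] using mem_mapE.mp (show y.castSucc ∈ _ from hac)
        exact hUdisj y (by simpa [mapE, Fin.castSuccEmb] using hy) c' hc' hy'
    · obtain ⟨b', hb', rfl⟩ := Finset.mem_image.mp hb
      rw [disjoint_comm, Finset.disjoint_left]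
      intro a ha hac
      rcases Finset.mem_insert.mp ha with rfl | ha
      · exact last_not_mem_mapE _ hac
      · obtain ⟨y, hy, rfl⟩ := Finset.mem_map.mp ha
        have hy' : y ∈ b' := by
          simpa [Fin.castSuccEmb] using mem_mapE.mp (show y.castSucc ∈ _ from hac)
        exact hUdisj y (by simpa [mapE, Fin.castSuccEmb] using hy) b' hb' hy'
    · obtain ⟨b', hb', rfl⟩ := Finset.mem_image.mp hb
      obtain ⟨c', hc', rfl⟩ := Finset.mem_image.mp hc
      have hne' : b' ≠ c' := fun h => hne (by rw [h])
      have hd : Disjoint b' c' :=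
        hP.2.1 b' (Finset.mem_filter.mp hb').1 c' (Finset.mem_filter.mp hc').1 hne'
      rw [Finset.disjoint_left]
      intro a ha hac
      obtain ⟨y, hy, rfl⟩ := Finset.mem_map.mp ha
      have hyb : y ∈ b' := by simpa [mapE, Fin.castSuccEmb] using hy
      have hyc : y ∈ c' := mem_mapE.mp (show y.castSucc ∈ _ from hac)
      exact Finset.disjoint_left.mp hd hyb hyc
  · -- sup = univ
    apply Finset.eq_univ_of_forall
    intro y
    rw [Finset.mem_sup]
    rcases eq_or_ne y (Fin.last n) with rfl | hy
    · exact ⟨B0 P, Finset.mem_insert_self _ _, Finset.mem_insert_self _ _⟩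
    · obtain ⟨x, rfl⟩ := Fin.exists_castSucc_eq.mpr hy
      obtain ⟨b, hbP, hxb⟩ := exists_block hP x
      have h1 : 1 ≤ b.card := Finset.card_pos.mpr (hP.1 b hbP)
      rcases eq_or_lt_of_le h1 with h | h
      · obtain ⟨a, rfl⟩ := Finset.card_eq_one.mp h.symm
        simp only [Finset.mem_singleton] at hxb; subst hxb
        refine ⟨B0 P, Finset.mem_insert_self _ _, ?_⟩
        exact Finset.mem_insert_of_mem (mem_mapE.mpr (mem_U.mpr hbP))
      · refine ⟨mapE b, Finset.mem_insert_of_mem ?_, mem_mapE.mpr hxb⟩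
        exact Finset.mem_image_of_mem _ (Finset.mem_filter.mpr ⟨hbP, h⟩)
  · -- cards ≥ 2
    intro b hb
    rcases Finset.mem_insert.mp hb with rfl | hb
    · exact Finset.one_lt_card.mpr ⟨Fin.last n, Finset.mem_insert_self _ _,
        x0.castSucc, Finset.mem_insert_of_mem (mem_mapE.mpr hx0),
        (Fin.castSucc_lt_last x0).ne'⟩
    · obtain ⟨c, hc, rfl⟩ := Finset.mem_image.mp hb
      rw [card_mapE]; exact (Finset.mem_filter.mp hc).2

lemma f_injOn {P Q : Finset (Finset (Fin n))} (hP : IsSetPartition P)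
    (hQ : IsSetPartition Q) (h : f P = f Q) : P = Q := by
  have hB0 : B0 P = B0 Q := by
    have : B0 P ∈ f Q := h ▸ Finset.mem_insert_self _ _
    rcases Finset.mem_insert.mp this with h' | h'
    · exact h'
    · exact absurd h' (by
        simp only [Finset.mem_image]
        rintro ⟨b, -, hb⟩
        exact last_not_mem_mapE b (hb ▸ Finset.mem_insert_self _ _))
  have hU : U P = U Q := by
    apply mapE_injective
    have h1 := congrArg (Finset.erase · (Fin.last n)) (hB0 : B0 P = B0 Q)
    simpa [B0, Finset.erase_insert, last_not_mem_mapE] using h1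
  have hbig : big P = big Q := by
    apply Finset.image_injective mapE_injective
    have e1 : (f P).erase (B0 P) = (big P).image mapE :=
      Finset.erase_insert (B0_not_mem_image P)
    have e2 : (f Q).erase (B0 Q) = (big Q).image mapE :=
      Finset.erase_insert (B0_not_mem_image Q)
    rw [← e1, ← e2, h, hB0]
  rw [← sing_union_big hP, ← sing_union_big hQ, sing_eq_image, sing_eq_image, hU, hbig]

def pull (c : Finset (Fin (n + 1))) : Finset (Fin n) :=
  Finset.univ.filter (fun x => x.castSucc ∈ c)

lemma mem_pull {c : Finset (Fin (n + 1))} {x : Fin n} : x ∈ pull c ↔ x.castSucc ∈ c := by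
  simp [pull]

lemma mapE_pull {c : Finset (Fin (n + 1))} (hc : Fin.last n ∉ c) : mapE (pull c) = c := by
  ext y
  rcases eq_or_ne y (Fin.last n) with rfl | hy
  · simp [last_not_mem_mapE, hc]
  · obtain ⟨x, rfl⟩ := Fin.exists_castSucc_eq.mpr hy
    rw [mem_mapE, mem_pull]

lemma mapE_pull_erase {c : Finset (Fin (n + 1))} :
    mapE (pull c) = c.erase (Fin.last n) := by
  ext y
  rcases eq_or_ne y (Fin.last n) with rfl | hy
  · simp [last_not_mem_mapE]
  · obtain ⟨x, rfl⟩ := Fin.exists_castSucc_eq.mpr hy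
    rw [mem_mapE, mem_pull, Finset.mem_erase]
    exact ⟨fun h => ⟨hy, h⟩, fun h => h.2⟩

lemma f_surj {Q : Finset (Finset (Fin (n + 1)))} (hQ : IsSetPartition Q)
    (h2 : ∀ b ∈ Q, 2 ≤ b.card) :
    ∃ P, (IsSetPartition P ∧ ∃ b ∈ P, b.card = 1) ∧ f P = Q := by
  obtain ⟨B, hBQ, hlB⟩ := exists_block hQ (Fin.last n)
  set P : Finset (Finset (Fin n)) :=
    ((pull B).image fun x => ({x} : Finset (Fin n))) ∪ (Q.erase B).image pull with hPdef
  have hmemP : ∀ {b : Finset (Fin n)}, b ∈ P ↔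
      (∃ x ∈ pull B, ({x} : Finset (Fin n)) = b) ∨ ∃ c ∈ Q.erase B, pull c = b := by
    intro b; simp [hPdef]
  have hlast_not : ∀ c ∈ Q.erase B, Fin.last n ∉ c := by
    intro c hc hl
    obtain ⟨hcB, hcQ⟩ := Finset.mem_erase.mp hc
    exact (Finset.disjoint_left.mp (hQ.2.1 c hcQ B hBQ hcB) hl) hlB
  have hpull_eq : ∀ c ∈ Q.erase B, mapE (pull c) = c := fun c hc =>
    mapE_pull (hlast_not c hc)
  have hpull_card : ∀ c ∈ Q.erase B, 2 ≤ (pull c).card := by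
    intro c hc
    rw [← card_mapE, hpull_eq c hc]
    exact h2 c (Finset.mem_erase.mp hc).2
  have hpullB_card : 1 ≤ (pull B).card := by
    rw [← card_mapE, mapE_pull_erase, Finset.card_erase_of_mem hlB]
    have := h2 B hBQ; omega
  obtain ⟨x1, hx1⟩ : (pull B).Nonempty := Finset.card_pos.mp hpullB_card
  have hBdisj : ∀ x ∈ pull B, ∀ c ∈ Q.erase B, x ∉ pull c := by
    intro x hx c hc hxc
    obtain ⟨hcB, hcQ⟩ := Finset.mem_erase.mp hc
    exact (Finset.disjoint_left.mp (hQ.2.1 B hBQ c hcQ (Ne.symm hcB))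
      (mem_pull.mp hx)) (mem_pull.mp hxc)
  have hpull_inj : ∀ c ∈ Q.erase B, ∀ c' ∈ Q.erase B, pull c = pull c' → c = c' := by
    intro c hc c' hc' h
    rw [← hpull_eq c hc, ← hpull_eq c' hc', h]
  have hPpart : IsSetPartition P := by
    refine ⟨?_, ?_, ?_⟩
    · intro b hb
      rcases hmemP.mp hb with ⟨x, -, rfl⟩ | ⟨c, hc, rfl⟩
      · exact ⟨x, Finset.mem_singleton_self x⟩
      · exact Finset.card_pos.mp (by have := hpull_card c hc; omega)
    · intro b hb c hc hne
      rcases hmemP.mp hb with ⟨x, hx, rfl⟩ | ⟨cb, hcb, rfl⟩ <;>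
        rcases hmemP.mp hc with ⟨y, hy, rfl⟩ | ⟨cc, hcc, rfl⟩
      · exact Finset.disjoint_singleton.mpr (fun h => hne (by rw [h]))
      · rw [Finset.disjoint_left]
        intro a ha hac
        rw [Finset.mem_singleton] at ha; subst ha
        exact hBdisj _ hx _ hcc hac
      · rw [disjoint_comm, Finset.disjoint_left]
        intro a ha hac
        rw [Finset.mem_singleton] at ha; subst ha
        exact hBdisj _ hy _ hcb hac
      · have hne' : cb ≠ cc := fun h => hne (by rw [h])
        have hd : Disjoint cb cc := hQ.2.1 cb (Finset.mem_erase.mp hcb).2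
          cc (Finset.mem_erase.mp hcc).2 hne'
        rw [Finset.disjoint_left]
        intro a ha hac
        exact (Finset.disjoint_left.mp hd (mem_pull.mp ha)) (mem_pull.mp hac)
    · apply Finset.eq_univ_of_forall
      intro x
      rw [Finset.mem_sup]
      obtain ⟨c, hcQ, hxc⟩ := exists_block hQ x.castSucc
      rcases eq_or_ne c B with rfl | hcB
      · refine ⟨{x}, hmemP.mpr (Or.inl ⟨x, mem_pull.mpr hxc, rfl⟩), ?_⟩
        simp
      · refine ⟨pull c, hmemP.mpr (Or.inr ⟨c, Finset.mem_erase.mpr ⟨hcB, hcQ⟩, rfl⟩), ?_⟩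
        exact mem_pull.mpr hxc
  have hUP : U P = pull B := by
    ext x
    rw [mem_U, hmemP]
    constructor
    · rintro (⟨y, hy, h⟩ | ⟨c, hc, h⟩)
      · rwa [← Finset.singleton_injective h]
      · have := hpull_card c hc
        rw [h] at this; simp at this
    · intro hx; exact Or.inl ⟨x, hx, rfl⟩
  have hbigP : big P = (Q.erase B).image pull := by
    ext b
    simp only [big, Finset.mem_filter, Finset.mem_image]
    constructor
    · rintro ⟨hb, hb2⟩
      rcases hmemP.mp hb with ⟨x, -, rfl⟩ | ⟨c, hc, rfl⟩
      · simp at hb2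
      · exact ⟨c, hc, rfl⟩
    · rintro ⟨c, hc, rfl⟩
      exact ⟨hmemP.mpr (Or.inr ⟨c, hc, rfl⟩), hpull_card c hc⟩
  have hB0 : B0 P = B := by
    rw [B0, hUP, mapE_pull_erase, Finset.insert_erase hlB]
  refine ⟨P, ⟨hPpart, ⟨{x1}, hmemP.mpr (Or.inl ⟨x1, hx1, rfl⟩), by simp⟩⟩, ?_⟩
  rw [f, hB0, hbigP, Finset.image_image]
  have himg : (Q.erase B).image (mapE ∘ pull) = Q.erase B := by
    rw [show (Q.erase B).image (mapE ∘ pull) = (Q.erase B).image id from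
      Finset.image_congr (fun c hc => hpull_eq c hc), Finset.image_id]
  rw [himg, Finset.insert_erase hBQ]

end BellAux

/-- The `n`-th Bell number: the number of set partitions of an `n`-element set. -/
noncomputable def bell (n : ℕ) : ℕ :=
  Set.ncard {P : Finset (Finset (Fin n)) | IsSetPartition P}

/-- The number of singleton-free set partitions of an `n`-element set. -/
noncomputable def bellT (n : ℕ) : ℕ :=
  Set.ncard {P : Finset (Finset (Fin n)) | IsSetPartition P ∧ ∀ b ∈ P, 2 ≤ b.card}

theorem bell_eq_bellT_add_bellT_succ (n : ℕ) (hn : 1 ≤ n) :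
    bell n = bellT n + bellT (n + 1) := by
  classical
  set S2 : Set (Finset (Finset (Fin n))) :=
    {P | IsSetPartition P ∧ ∀ b ∈ P, 2 ≤ b.card} with hS2def
  set S1 : Set (Finset (Finset (Fin n))) :=
    {P | IsSetPartition P ∧ ∃ b ∈ P, b.card = 1} with hS1def
  have hunion : {P : Finset (Finset (Fin n)) | IsSetPartition P} = S2 ∪ S1 := by
    ext P
    simp only [Set.mem_setOf_eq, Set.mem_union, hS2def, hS1def]
    constructor
    · intro hP
      by_cases h : ∃ b ∈ P, b.card = 1
      · exact Or.inr ⟨hP, h⟩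
      · push_neg at h
        refine Or.inl ⟨hP, fun b hb => ?_⟩
        have h1 : 1 ≤ b.card := Finset.card_pos.mpr (hP.1 b hb)
        have := h b hb
        omega
    · rintro (⟨h, -⟩ | ⟨h, -⟩) <;> exact h
  have hdisj : Disjoint S2 S1 := by
    rw [Set.disjoint_left]
    rintro P ⟨-, h2⟩ ⟨-, b, hb, hb1⟩
    have := h2 b hb; omega
  have himg : BellAux.f '' S1
      = {Q : Finset (Finset (Fin (n + 1))) | IsSetPartition Q ∧ ∀ b ∈ Q, 2 ≤ b.card} := by
    ext Q
    simp only [Set.mem_image, Set.mem_setOf_eq, hS1def]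
    constructor
    · rintro ⟨P, ⟨hP, hs⟩, rfl⟩
      exact BellAux.f_mem_target hP hs
    · rintro ⟨hQ, h2⟩
      obtain ⟨P, hP, rfl⟩ := BellAux.f_surj hQ h2
      exact ⟨P, hP, rfl⟩
  have hS1card : S1.ncard = bellT (n + 1) := by
    rw [bellT, ← himg]
    exact (Set.ncard_image_of_injOn
      (fun P hP Q hQ h => BellAux.f_injOn hP.1 hQ.1 h)).symm
  rw [bell, hunion, Set.ncard_union_eq hdisj (Set.toFinite _) (Set.toFinite _), hS1card]
  rfl
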